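/- Let e be a vector in ℝⁿ whose entries are i.i.d. Gaussian with mean 0 and standard deviation σ > 0. Then for any ε with 0 < ε < 1, the probability that ‖e‖² ≤ σ²·n/(1-ε) is at least 1 - exp(-ε²n/4). -/

import Mathlib

open MeasureTheory ProbabilityTheory Real
open scoped NNReal ENNReal

lemma key_poly {ε : ℝ} (hε0 : 0 < ε) (hε1 : ε < 1) :
    (1 - ε)⁻¹ ≤ Real.exp (ε / (1 - ε) - ε ^ 2 / 2) := by
  have hε' : 0 < 1 - ε := by linarith
  set z := ε / (1 - ε) - ε ^ 2 / 2 with hzdef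
  clear_value z
  have hw : (1 - ε) * z = ε - (1 - ε) * ε ^ 2 / 2 := by
    rw [hzdef]; field_simp
  have hz2 : ε ≤ z := by
    have h1 : ε + ε ^ 2 ≤ ε / (1 - ε) := by
      rw [le_div_iff₀ hε']; nlinarith
    linarith [sq_nonneg ε]
  have hz : 0 ≤ z := by linarith
  have hcoef : 0 ≤ ε - (1 - ε) * ε ^ 2 / 2 := by nlinarith
  have hmul : (ε - (1 - ε) * ε ^ 2 / 2) * ε ≤ (ε - (1 - ε) * ε ^ 2 / 2) * z :=
    mul_le_mul_of_nonneg_left hz2 hcoef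
  have hzw : (1 - ε) * z * z = (ε - (1 - ε) * ε ^ 2 / 2) * z := by rw [hw]
  have h2 := Real.quadratic_le_exp_of_nonneg hz
  have h3 : (1 - ε)⁻¹ ≤ 1 + z + z ^ 2 / 2 := by
    rw [inv_le_iff_one_le_mul₀ hε']
    nlinarith [hmul, hzw, hw, hε0, sq_nonneg ε, pow_pos hε0 3]
  linarith

lemma gaussian_exp_sq {σ t : ℝ} (hσ : 0 < σ) (ht2 : 2 * t * σ ^ 2 < 1) :
    Integrable (fun x => Real.exp (t * x ^ 2)) (gaussianReal 0 ⟨σ ^ 2, sq_nonneg σ⟩) ∧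
    ∫ x, Real.exp (t * x ^ 2) ∂(gaussianReal 0 ⟨σ ^ 2, sq_nonneg σ⟩)
      = (Real.sqrt (1 - 2 * t * σ ^ 2))⁻¹ := by
  have hσ2 : (0:ℝ) < σ ^ 2 := by positivity
  set v : NNReal := ⟨σ ^ 2, sq_nonneg σ⟩ with hv
  have hv0 : v ≠ 0 := by
    intro h
    have : (v : ℝ) = 0 := by rw [h]; simp
    rw [hv] at this; change σ ^ 2 = 0 at this; nlinarith
  have hvr : (v : ℝ) = σ ^ 2 := rfl
  set b := 1 / (2 * σ ^ 2) - t with hb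
  have hbpos : 0 < b := by
    rw [hb]; rw [div_sub' (by positivity)]
    apply div_pos (by nlinarith) (by positivity)
  have hpdf_eq : ∀ x : ℝ, gaussianPDFReal 0 v x * Real.exp (t * x ^ 2)
      = (Real.sqrt (2 * π * σ ^ 2))⁻¹ * Real.exp (-b * x ^ 2) := by
    intro x
    rw [gaussianPDFReal, hvr, mul_assoc, ← Real.exp_add]
    congr 1
    congr 1; rw [hb]; field_simp
    ring
  rw [gaussianReal_of_var_ne_zero _ hv0]
  have hdens : (gaussianPDF 0 v) = fun x => ((Real.toNNReal (gaussianPDFReal 0 v x) : NNReal) : ENNReal) := by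
    funext x; rw [gaussianPDF, ENNReal.ofReal]
  have hmeas : Measurable fun x => Real.toNNReal (gaussianPDFReal 0 v x) :=
    (measurable_gaussianPDFReal 0 v).real_toNNReal
  have hsmul : ∀ x : ℝ, (Real.toNNReal (gaussianPDFReal 0 v x) : ℝ≥0) • Real.exp (t * x ^ 2)
      = (Real.sqrt (2 * π * σ ^ 2))⁻¹ * Real.exp (-b * x ^ 2) := by
    intro x
    rw [NNReal.smul_def, smul_eq_mul, Real.coe_toNNReal _ (gaussianPDFReal_nonneg 0 v x), hpdf_eq]
  constructor
  · rw [hdens, integrable_withDensity_iff_integrable_smul hmeas]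
    have : (fun x : ℝ => (Real.toNNReal (gaussianPDFReal 0 v x) : ℝ≥0) • Real.exp (t * x ^ 2))
        = fun x => (Real.sqrt (2 * π * σ ^ 2))⁻¹ * Real.exp (-b * x ^ 2) := funext hsmul
    rw [this]
    exact (integrable_exp_neg_mul_sq hbpos).const_mul _
  · rw [hdens, integral_withDensity_eq_integral_smul hmeas]
    simp_rw [hsmul]
    rw [integral_const_mul, integral_gaussian]
    rw [inv_mul_eq_div, ← Real.sqrt_div (by positivity : (0:ℝ) ≤ π / b)]
    rw [show π / b / (2 * π * σ ^ 2) = (1 - 2 * t * σ ^ 2)⁻¹ by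
      have : 1 - 2 * t * σ ^ 2 = 2 * σ ^ 2 * b := by rw [hb]; field_simp
      rw [this]; field_simp [Real.pi_ne_zero, hbpos.ne']]
    exact Real.sqrt_inv _

/-- If `e` is a vector in `ℝⁿ` with i.i.d. Gaussian entries of mean `0` and
standard deviation `σ`, then `‖e‖² ≤ σ² n / (1 - ε)` with probability at least
`1 - exp (-ε² n / 4)`. -/
theorem gaussian_norm_sq_bound
    {Ω : Type*} [MeasureSpace Ω] [IsProbabilityMeasure (ℙ : Measure Ω)]
    (n : ℕ) (σ : ℝ) (hσ : 0 < σ) (e : Fin n → Ω → ℝ)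
    (hmeas : ∀ i, Measurable (e i))
    (hindep : iIndepFun e ℙ)
    (hlaw : ∀ i, Measure.map (e i) ℙ = gaussianReal 0 ⟨σ ^ 2, sq_nonneg σ⟩)
    (ε : ℝ) (hε0 : 0 < ε) (hε1 : ε < 1) :
    ℙ {ω | ∑ i, (e i ω) ^ 2 ≤ σ ^ 2 * n / (1 - ε)} ≥
      ENNReal.ofReal (1 - Real.exp (-(ε ^ 2) * n / 4)) := by
  have hσ2 : (0:ℝ) < σ ^ 2 := by positivity
  have h1ε : (0:ℝ) < 1 - ε := by linarith
  set t : ℝ := ε / (2 * σ ^ 2) with htdef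
  have ht0 : 0 ≤ t := by positivity
  have h2t : 2 * t * σ ^ 2 = ε := by rw [htdef]; field_simp
  have ht2 : 2 * t * σ ^ 2 < 1 := by rw [h2t]; exact hε1
  obtain ⟨hint_g, heq_g⟩ := gaussian_exp_sq hσ ht2
  rw [h2t] at heq_g
  set Y : Fin n → Ω → ℝ := fun i ω => (e i ω) ^ 2 with hYdef
  have hmeasY : ∀ i, Measurable (Y i) := fun i => (hmeas i).pow_const 2
  have hindepY : iIndepFun Y ℙ :=
    hindep.comp (fun _ x => x ^ 2) (fun _ => measurable_id.pow_const 2)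
  have hmeasf : Measurable fun x : ℝ => rexp (t * x ^ 2) :=
    ((measurable_id.pow_const 2).const_mul t).exp
  have hintY : ∀ i, Integrable (fun ω => rexp (t * Y i ω)) ℙ := by
    intro i
    have h1 : Integrable ((fun x => rexp (t * x ^ 2)) ∘ (e i)) ℙ := by
      rw [← integrable_map_measure hmeasf.aestronglyMeasurable (hmeas i).aemeasurable]
      rw [hlaw i]; exact hint_g
    exact h1
  have hmgfY : ∀ i, mgf (Y i) ℙ t = (Real.sqrt (1 - ε))⁻¹ := by
    intro i
    have h1 : mgf (Y i) ℙ t = ∫ x, rexp (t * x ^ 2) ∂(Measure.map (e i) ℙ) := by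
      rw [mgf, integral_map (hmeas i).aemeasurable hmeasf.aestronglyMeasurable]
    rw [h1, hlaw i, heq_g]
  set c : ℝ := σ ^ 2 * n / (1 - ε) with hcdef
  have hintS : Integrable (fun ω => rexp (t * (∑ i, Y i) ω)) ℙ :=
    hindepY.integrable_exp_mul_sum hmeasY (fun i _ => hintY i)
  have hchern := measure_ge_le_exp_mul_mgf (X := ∑ i, Y i) (μ := ℙ) c ht0 hintS
  rw [hindepY.mgf_sum hmeasY] at hchern
  simp_rw [hmgfY, Finset.prod_const, Finset.card_univ, Fintype.card_fin] at hchern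
  -- numeric bound
  have htc : t * c = ε * n / (2 * (1 - ε)) := by
    rw [htdef, hcdef]; field_simp
  have hfac : (Real.sqrt (1 - ε))⁻¹ ≤ rexp (ε / (2 * (1 - ε)) - ε ^ 2 / 4) := by
    rw [← Real.sqrt_inv]
    have hsq : rexp (ε / (1 - ε) - ε ^ 2 / 2) = rexp (ε / (2 * (1 - ε)) - ε ^ 2 / 4) ^ 2 := by
      rw [← Real.exp_nat_mul]; congr 1; push_cast; field_simp; ring
    calc Real.sqrt ((1 - ε)⁻¹) ≤ Real.sqrt (rexp (ε / (1 - ε) - ε ^ 2 / 2)) :=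
          Real.sqrt_le_sqrt (key_poly hε0 hε1)
      _ = rexp (ε / (2 * (1 - ε)) - ε ^ 2 / 4) := by
          rw [hsq, Real.sqrt_sq (Real.exp_nonneg _)]
  have hnum : rexp (-t * c) * ((Real.sqrt (1 - ε))⁻¹) ^ n ≤ rexp (-(ε ^ 2) * n / 4) := by
    calc rexp (-t * c) * ((Real.sqrt (1 - ε))⁻¹) ^ n
        ≤ rexp (-t * c) * (rexp (ε / (2 * (1 - ε)) - ε ^ 2 / 4)) ^ n := by
          gcongr
      _ = rexp (-t * c + n * (ε / (2 * (1 - ε)) - ε ^ 2 / 4)) := by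
          rw [← Real.exp_nat_mul, ← Real.exp_add]
      _ = rexp (-(ε ^ 2) * n / 4) := by
          congr 1; rw [neg_mul, htc]; field_simp; ring
  have hchern2 : (ℙ {ω | c ≤ (∑ i, Y i) ω}).toReal ≤ rexp (-(ε ^ 2) * n / 4) :=
    hchern.trans hnum
  -- wrap up
  have hSmeas : Measurable fun ω => ∑ i, (e i ω) ^ 2 :=
    Finset.measurable_sum _ (fun i _ => (hmeas i).pow_const 2)
  set A : Set Ω := {ω | ∑ i, (e i ω) ^ 2 ≤ c} with hAdef
  have hAmeas : MeasurableSet A := measurableSet_le hSmeas measurable_const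
  have hcompl : Aᶜ ⊆ {ω | c ≤ (∑ i, Y i) ω} := by
    intro ω hω
    simp only [hAdef, Set.mem_compl_iff, Set.mem_setOf_eq, not_le] at hω
    simp only [Set.mem_setOf_eq, Finset.sum_apply]
    exact hω.le
  have hup : ℙ Aᶜ ≤ ENNReal.ofReal (rexp (-(ε ^ 2) * n / 4)) := by
    refine (measure_mono hcompl).trans ?_
    rw [← ENNReal.ofReal_toReal (measure_ne_top ℙ _)]
    exact ENNReal.ofReal_le_ofReal hchern2
  have hkey : 1 - ℙ Aᶜ ≤ ℙ A := by
    rw [tsub_le_iff_right]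
    have h := measure_add_measure_compl (μ := ℙ) hAmeas
    rw [measure_univ] at h
    exact h.ge
  calc ENNReal.ofReal (1 - rexp (-(ε ^ 2) * n / 4))
      = 1 - ENNReal.ofReal (rexp (-(ε ^ 2) * n / 4)) := by
        rw [ENNReal.ofReal_sub _ (Real.exp_nonneg _), ENNReal.ofReal_one]
    _ ≤ 1 - ℙ Aᶜ := tsub_le_tsub_left hup 1
    _ ≤ ℙ A := hkey
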